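/- Let G be a group, let α be a U(1)-valued 2-cocycle on G, and let g, h, t ∈ G with gh = hg. Then the phase is conjugation invariant on commuting pairs: γ(α)(tgt⁻¹, tht⁻¹) = γ(α)(g, h). -/

import Mathlib

/-- For a `U(1)`-valued 2-cocycle `α` on `G`, the phase is conjugation
invariant on commuting pairs: if `gh = hg` then
`γ(α)(tgt⁻¹, tht⁻¹) = γ(α)(g, h)` for every `t ∈ G`. -/
theorem phase_conj_invariant {G : Type*} [Group G] (α : G → G → Circle)
    (hα_one_right : ∀ g : G, α g 1 = 1) (hα_one_left : ∀ g : G, α 1 g = 1)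
    (hα_cocycle : ∀ g h k : G, α g (h * k) * α h k = α g h * α (g * h) k) :
    ∀ g h t : G, g * h = h * g →
      α (t * g * t⁻¹) (t * h * t⁻¹) * (α (t * h * t⁻¹) (t * g * t⁻¹))⁻¹ =
        α g h * (α h g)⁻¹ := by
  intro g h t hc
  have A1 := hα_cocycle (t*g) t⁻¹ (t*h)
  have A2 := hα_cocycle t⁻¹ t h
  have A3 := hα_cocycle (t*g*t⁻¹) (t*h) t⁻¹
  have A4 := hα_cocycle t g h
  have B1 := hα_cocycle (t*h) t⁻¹ (t*g)
  have B2 := hα_cocycle t⁻¹ t g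
  have B3 := hα_cocycle (t*h*t⁻¹) (t*g) t⁻¹
  have B4 := hα_cocycle t h g
  have e1 : t⁻¹ * (t*h) = h := by group
  have e2 : t⁻¹ * (t*g) = g := by group
  have e3 : t*g*t⁻¹ * (t*h) = t*(g*h) := by group
  have e4 : t*h*t⁻¹ * (t*g) = t*(g*h) := by rw [hc]; group
  have e5 : (t⁻¹ : G) * t = 1 := by group
  rw [e5, hα_one_left, mul_one] at A2
  rw [e5, hα_one_left, mul_one] at B2
  rw [e1] at A1
  rw [e2] at B1
  rw [e3] at A3
  rw [e4] at B3
  rw [← hc] at B4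
  rw [← Circle.coe_inj] at A1 A2 A3 A4 B1 B2 B3 B4 ⊢
  push_cast at A1 A2 A3 A4 B1 B2 B3 B4 ⊢
  set x1 : ℂ := (↑(α (t*g*t⁻¹) (t*h*t⁻¹)) : ℂ) with hx1
  set x2 : ℂ := (↑(α (t*h*t⁻¹) (t*g*t⁻¹)) : ℂ) with hx2
  set x3 : ℂ := (↑(α g h) : ℂ) with hx3
  set x4 : ℂ := (↑(α h g) : ℂ) with hx4
  set x5 : ℂ := (↑(α t g) : ℂ) with hx5
  set x6 : ℂ := (↑(α t h) : ℂ) with hx6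
  set x7 : ℂ := (↑(α t (g*h)) : ℂ) with hx7
  set x8 : ℂ := (↑(α (t*g) h) : ℂ) with hx8
  set x9 : ℂ := (↑(α (t*h) g) : ℂ) with hx9
  set x10 : ℂ := (↑(α t⁻¹ (t*h)) : ℂ) with hx10
  set x11 : ℂ := (↑(α t⁻¹ (t*g)) : ℂ) with hx11
  set x12 : ℂ := (↑(α t⁻¹ t) : ℂ) with hx12
  set x13 : ℂ := (↑(α (t*g) t⁻¹) : ℂ) with hx13
  set x14 : ℂ := (↑(α (t*h) t⁻¹) : ℂ) with hx14
  set x15 : ℂ := (↑(α (t*g*t⁻¹) (t*h)) : ℂ) with hx15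
  set x16 : ℂ := (↑(α (t*h*t⁻¹) (t*g)) : ℂ) with hx16
  set x17 : ℂ := (↑(α (t*(g*h)) t⁻¹) : ℂ) with hx17
  have n : ∀ y : G → G → Circle, True := fun _ => trivial
  have n1 : x1 ≠ 0 := hx1 ▸ Circle.coe_ne_zero _
  have n2 : x2 ≠ 0 := hx2 ▸ Circle.coe_ne_zero _
  have n3 : x3 ≠ 0 := hx3 ▸ Circle.coe_ne_zero _
  have n4 : x4 ≠ 0 := hx4 ▸ Circle.coe_ne_zero _
  have n5 : x5 ≠ 0 := hx5 ▸ Circle.coe_ne_zero _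
  have n6 : x6 ≠ 0 := hx6 ▸ Circle.coe_ne_zero _
  have n7 : x7 ≠ 0 := hx7 ▸ Circle.coe_ne_zero _
  have n8 : x8 ≠ 0 := hx8 ▸ Circle.coe_ne_zero _
  have n9 : x9 ≠ 0 := hx9 ▸ Circle.coe_ne_zero _
  have n10 : x10 ≠ 0 := hx10 ▸ Circle.coe_ne_zero _
  have n11 : x11 ≠ 0 := hx11 ▸ Circle.coe_ne_zero _
  have n12 : x12 ≠ 0 := hx12 ▸ Circle.coe_ne_zero _
  have n13 : x13 ≠ 0 := hx13 ▸ Circle.coe_ne_zero _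
  have n14 : x14 ≠ 0 := hx14 ▸ Circle.coe_ne_zero _
  have n15 : x15 ≠ 0 := hx15 ▸ Circle.coe_ne_zero _
  have n16 : x16 ≠ 0 := hx16 ▸ Circle.coe_ne_zero _
  have n17 : x17 ≠ 0 := hx17 ▸ Circle.coe_ne_zero _
  -- A1 : x8 * x10 = x13 * x15;  A2 : x10 * x6 = x12;  A3 : x1 * x14 = x15 * x17
  -- A4 : x7 * x3 = x5 * x8;   B1 : x9 * x11 = x14 * x16;  B2 : x11 * x5 = x12
  -- B3 : x2 * x13 = x16 * x17; B4 : x7 * x4 = x6 * x9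
  have eab : x1 = x8 * x12 * x17 / (x6 * x13 * x14) := by
    field_simp
    linear_combination x13 * x6 * A3 - x6 * x17 * A1 + x8 * x17 * A2
  have eba : x2 = x9 * x12 * x17 / (x5 * x14 * x13) := by
    field_simp
    linear_combination x14 * x5 * B3 - x5 * x17 * B1 + x9 * x17 * B2
  have egh : x8 = x7 * x3 / x5 := by field_simp; linear_combination -A4
  have ehg : x9 = x7 * x4 / x6 := by field_simp; linear_combination -B4
  rw [eab, eba, egh, ehg]
  field_simp
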